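/- Let μ be a measure on ℤ^d (d ≥ 1) equipped with the supremum metric d_∞, assigning to each point x ∈ ℤ^d a weight μ({x}) ∈ (0, ∞), and assume there exists y₀ ∈ ℤ^d with limsup_{r→∞} μ(B_{r+1}(y₀))/μ(B_r(y₀)) < ∞, where B_r(x) is the open d_∞-ball of radius r centered at x. Then the centered maximal operator M^c on (ℤ^d, d_∞, μ) possesses the dichotomy property: for every f ∈ L¹_loc(μ), if M^c f(x₀) < ∞ for some x₀ ∈ ℤ^d, then M^c f(x) < ∞ for every x ∈ ℤ^d outside a set of μ-measure zero. -/

import Mathlib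

open MeasureTheory Metric Filter Set ENNReal

/-- The centered Hardy–Littlewood maximal function of `f` at `x`,
with respect to the measure `μ`. -/
noncomputable def centeredMaximal {X : Type*} [MeasurableSpace X] [PseudoMetricSpace X]
    (μ : Measure X) (f : X → ℝ) (x : X) : ℝ≥0∞ :=
  ⨆ (r : ℝ) (_ : 0 < r),
    (∫⁻ y in Metric.ball x r, ENNReal.ofReal |f y| ∂μ) / μ (Metric.ball x r)

/-- The non-centered Hardy–Littlewood maximal function of `f` at `x`:
the supremum is taken over all open balls containing `x`. -/
noncomputable def noncenteredMaximal {X : Type*} [MeasurableSpace X] [PseudoMetricSpace X]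
    (μ : Measure X) (f : X → ℝ) (x : X) : ℝ≥0∞ :=
  ⨆ (c : X) (r : ℝ) (_ : 0 < r) (_ : x ∈ Metric.ball c r),
    (∫⁻ y in Metric.ball c r, ENNReal.ofReal |f y| ∂μ) / μ (Metric.ball c r)

/-- `f ∈ L¹_loc(μ)`: `∫_B |f| dμ < ∞` for every open ball `B`. -/
def LocallyIntegrableBall {X : Type*} [MeasurableSpace X] [PseudoMetricSpace X]
    (μ : Measure X) (f : X → ℝ) : Prop :=
  ∀ (c : X) (r : ℝ), 0 < r → (∫⁻ y in Metric.ball c r, ENNReal.ofReal |f y| ∂μ) < ⊤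

private lemma aux_measure_finite_set (d : ℕ) (w : (Fin d → ℤ) → ℝ≥0∞)
    (μ : Measure (Fin d → ℤ)) (hμ : μ = Measure.count.withDensity w)
    (s : Set (Fin d → ℤ)) (hs : s.Finite) : μ s = ∑ a ∈ hs.toFinset, w a := by
  rw [hμ, withDensity_apply _ s.to_countable.measurableSet,
    ← lintegral_indicator s.to_countable.measurableSet w, lintegral_count]
  exact tsum_eq_sum (fun b hb => Set.indicator_of_notMem (by simpa using hb) w) |>.trans
    (Finset.sum_congr rfl (fun a ha => Set.indicator_of_mem (by simpa using ha) w))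

private lemma aux_ball_finite (d : ℕ) (x : Fin d → ℤ) (r : ℝ) : (Metric.ball x r).Finite :=
  ((isCompact_closedBall x r).finite (isDiscrete_iff_discreteTopology.mpr inferInstance)).subset ball_subset_closedBall

/-- On `ℤ^d` with the supremum metric and a measure determined by strictly
positive finite point weights, if `limsup_{r→∞} μ(B_{r+1}(y₀))/μ(B_r(y₀)) < ∞` for some
`y₀`, then the centered maximal operator possesses the dichotomy property. -/
theorem dichotomy_centered_int_of_condC (d : ℕ) (hd : 1 ≤ d)
    (w : (Fin d → ℤ) → ℝ≥0∞) (hw : ∀ x, 0 < w x ∧ w x < ⊤)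
    (μ : Measure (Fin d → ℤ)) (hμ : μ = Measure.count.withDensity w)
    (y₀ : Fin d → ℤ)
    (hC : Filter.limsup (fun r : ℝ => μ (Metric.ball y₀ (r + 1)) / μ (Metric.ball y₀ r))
      Filter.atTop < ⊤)
    (f : (Fin d → ℤ) → ℝ) (hf : LocallyIntegrableBall μ f)
    (x₀ : Fin d → ℤ) (hx₀ : centeredMaximal μ f x₀ < ⊤) :
    ∀ᵐ x ∂μ, centeredMaximal μ f x < ⊤ := by
  -- measure of balls: finite and positive
  have hfin : ∀ (c : Fin d → ℤ) (r : ℝ), μ (Metric.ball c r) < ⊤ := by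
    intro c r
    rw [aux_measure_finite_set d w μ hμ _ (aux_ball_finite d c r)]
    exact ENNReal.sum_lt_top.2 fun a _ => (hw a).2
  have hsingle : ∀ c : Fin d → ℤ, μ {c} = w c := by
    intro c
    rw [aux_measure_finite_set d w μ hμ {c} (Set.finite_singleton c)]
    simp
  have hpos : ∀ (c : Fin d → ℤ) (r : ℝ), 0 < r → 0 < μ (Metric.ball c r) := by
    intro c r hr
    calc (0 : ℝ≥0∞) < w c := (hw c).1
      _ = μ {c} := (hsingle c).symm
      _ ≤ μ (Metric.ball c r) := measure_mono (by simp [hr])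
  -- doubling-type bound
  set C : ℝ≥0∞ := Filter.limsup (fun r : ℝ => μ (Metric.ball y₀ (r + 1)) / μ (Metric.ball y₀ r))
      Filter.atTop + 1 with hCdef
  have hCtop : C < ⊤ := by
    rw [hCdef]
    exact ENNReal.add_lt_top.2 ⟨hC, one_lt_top⟩
  have hCgt : Filter.limsup (fun r : ℝ => μ (Metric.ball y₀ (r + 1)) / μ (Metric.ball y₀ r))
      Filter.atTop < C := ENNReal.lt_add_right hC.ne one_ne_zero
  obtain ⟨r₁, hr₁⟩ := Filter.eventually_atTop.1 (Filter.eventually_lt_of_limsup_lt hCgt)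
  set r₀ : ℝ := max r₁ 1 with hr₀def
  have hr₀pos : (0 : ℝ) < r₀ := lt_of_lt_of_le one_pos (le_max_right _ _)
  have hstep : ∀ s : ℝ, r₀ ≤ s → μ (Metric.ball y₀ (s + 1)) ≤ C * μ (Metric.ball y₀ s) := by
    intro s hs
    have h1 := hr₁ s (le_trans (le_max_left _ _) hs)
    have hpos' := hpos y₀ s (lt_of_lt_of_le hr₀pos hs)
    exact (ENNReal.div_le_iff hpos'.ne' (hfin y₀ s).ne).1 h1.le
  have hiter : ∀ (k : ℕ) (s : ℝ), r₀ ≤ s →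
      μ (Metric.ball y₀ (s + k)) ≤ C ^ k * μ (Metric.ball y₀ s) := by
    intro k
    induction k with
    | zero => intro s _; simp
    | succ k ih =>
      intro s hs
      have h1 : μ (Metric.ball y₀ (s + (k + 1 : ℕ))) ≤ C * μ (Metric.ball y₀ (s + k)) := by
        have := hstep (s + k) (le_trans hs (le_add_of_nonneg_right (Nat.cast_nonneg k)))
        have heq : (s + k) + 1 = s + ((k : ℝ) + 1) := by ring
        rw [heq] at this
        simpa using this
      calc μ (Metric.ball y₀ (s + (k + 1 : ℕ))) ≤ C * μ (Metric.ball y₀ (s + k)) := h1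
        _ ≤ C * (C ^ k * μ (Metric.ball y₀ s)) := mul_le_mul_right (ih s hs) C
        _ = C ^ (k + 1) * μ (Metric.ball y₀ s) := by rw [pow_succ]; ring
  -- main pointwise bound
  refine ae_of_all μ fun x => ?_
  set a : ℝ := dist x y₀ with hadef
  set b : ℝ := dist x₀ y₀ with hbdef
  have ha0 : 0 ≤ a := dist_nonneg
  have hb0 : 0 ≤ b := dist_nonneg
  set k : ℕ := ⌈2 * a + 2 * b⌉₊ with hkdef
  set R : ℝ := r₀ + a + 1 with hRdef
  have hRpos : 0 < R := by positivity
  set M : ℝ≥0∞ := centeredMaximal μ f x₀ with hMdef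
  have hbound : centeredMaximal μ f x ≤
      max ((∫⁻ y in Metric.ball x R, ENNReal.ofReal |f y| ∂μ) / w x) (M * C ^ k) := by
    rw [centeredMaximal]
    refine iSup₂_le fun r hr => ?_
    by_cases hcase : r ≤ r₀ + a
    · -- small radii
      refine le_trans ?_ (le_max_left _ _)
      refine ENNReal.div_le_div (lintegral_mono_set (ball_subset_ball (by rw [hRdef]; linarith)))
        ?_
      calc w x = μ {x} := (hsingle x).symm
        _ ≤ μ (Metric.ball x r) := measure_mono (by simp [hr])
    · -- large radii
      push_neg at hcase
      refine le_trans ?_ (le_max_right _ _)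
      have hra : r₀ ≤ r - a := by linarith
      have h1 : Metric.ball x r ⊆ Metric.ball x₀ (r + a + b) := by
        apply ball_subset_ball'
        have : dist x x₀ ≤ a + b := by
          calc dist x x₀ ≤ dist x y₀ + dist y₀ x₀ := dist_triangle _ _ _
            _ = a + b := by rw [hadef, hbdef, dist_comm y₀ x₀]
        linarith
      have hnum1 : (∫⁻ y in Metric.ball x r, ENNReal.ofReal |f y| ∂μ) ≤
          (∫⁻ y in Metric.ball x₀ (r + a + b), ENNReal.ofReal |f y| ∂μ) :=
        lintegral_mono_set h1
      have hMle : (∫⁻ y in Metric.ball x₀ (r + a + b), ENNReal.ofReal |f y| ∂μ) /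
          μ (Metric.ball x₀ (r + a + b)) ≤ M := by
        rw [hMdef, centeredMaximal]
        exact le_iSup₂ (f := fun (r' : ℝ) (_ : 0 < r') =>
          (∫⁻ y in Metric.ball x₀ r', ENNReal.ofReal |f y| ∂μ) / μ (Metric.ball x₀ r'))
          (r + a + b) (by linarith)
      have hnum2 : (∫⁻ y in Metric.ball x₀ (r + a + b), ENNReal.ofReal |f y| ∂μ) ≤
          M * μ (Metric.ball x₀ (r + a + b)) :=
        (ENNReal.div_le_iff (hpos x₀ (r + a + b) (by linarith)).ne'
          (hfin x₀ (r + a + b)).ne).1 hMle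
      have h2 : Metric.ball x₀ (r + a + b) ⊆ Metric.ball y₀ ((r - a) + k) := by
        apply ball_subset_ball'
        have hk : 2 * a + 2 * b ≤ (k : ℝ) := Nat.le_ceil _
        have : dist x₀ y₀ = b := rfl
        linarith
      have h3 : μ (Metric.ball y₀ ((r - a) + k)) ≤ C ^ k * μ (Metric.ball y₀ (r - a)) :=
        hiter k (r - a) hra
      have h4 : Metric.ball y₀ (r - a) ⊆ Metric.ball x r := by
        apply ball_subset_ball'
        have : dist y₀ x = a := by rw [hadef, dist_comm]
        linarith
      have hchain : (∫⁻ y in Metric.ball x r, ENNReal.ofReal |f y| ∂μ) ≤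
          (M * C ^ k) * μ (Metric.ball x r) := by
        calc (∫⁻ y in Metric.ball x r, ENNReal.ofReal |f y| ∂μ)
            ≤ M * μ (Metric.ball x₀ (r + a + b)) := le_trans hnum1 hnum2
          _ ≤ M * μ (Metric.ball y₀ ((r - a) + k)) := mul_le_mul_right (measure_mono h2) M
          _ ≤ M * (C ^ k * μ (Metric.ball y₀ (r - a))) := mul_le_mul_right h3 M
          _ ≤ M * (C ^ k * μ (Metric.ball x r)) :=
            mul_le_mul_right (mul_le_mul_right (measure_mono h4) _) M
          _ = (M * C ^ k) * μ (Metric.ball x r) := by ring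
      exact (ENNReal.div_le_iff (hpos x r hr).ne' (hfin x r).ne).2 hchain
  refine lt_of_le_of_lt hbound (max_lt ?_ ?_)
  · exact ENNReal.div_lt_top (hf x R hRpos).ne (hw x).1.ne'
  · exact ENNReal.mul_lt_top hx₀ (ENNReal.pow_ne_top hCtop.ne).lt_top
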